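/- arXiv:1109.1352 — 3 statements merged into one kernel-verified Lean document; each statement's English description precedes it below -/
import Mathlib

section
/- An element ξ ∈ ℝ ⊗_ℚ ℝ equals SAF(f) for some interval exchange transformation f of I = [p,q) if and only if ξ lies in ℝ ∧_ℚ ℝ, the subspace of ℝ ⊗_ℚ ℝ spanned by all elements a ⊗ b − b ⊗ a. -/
open scoped TensorProduct

/-- An interval exchange transformation of the half-open interval `[p, q)`:
a bijection of `[p, q)` onto itself, extended by the identity outside,
which is a translation on each piece of a finite partition of `[p, q)`
into half-open intervals. -/
def IsIET (p q : ℝ) (f : ℝ → ℝ) : Prop :=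
  Set.BijOn f (Set.Ico p q) (Set.Ico p q) ∧
  (∀ x, x ∉ Set.Ico p q → f x = x) ∧
  ∃ (n : ℕ) (pt : Fin (n + 1) → ℝ),
    StrictMono pt ∧ pt 0 = p ∧ pt (Fin.last n) = q ∧
    ∀ i : Fin n, ∃ t : ℝ,
      ∀ x ∈ Set.Ico (pt i.castSucc) (pt i.succ), f x = x + t

/-- A restricted rotation of type `(a, b)` on `[p, q)`: it exchanges two
adjacent half-open intervals of lengths `a` (on the left) and `b` (on the
right) by translation, fixing the rest of the line. -/
def IsRestrictedRotation (p q a b : ℝ) (f : ℝ → ℝ) : Prop :=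
  0 < a ∧ 0 < b ∧ ∃ x : ℝ, p ≤ x ∧ x + a + b ≤ q ∧
    (∀ y ∈ Set.Ico x (x + a), f y = y + b) ∧
    (∀ y ∈ Set.Ico (x + a) (x + a + b), f y = y - a) ∧
    (∀ y, y ∉ Set.Ico x (x + a + b) → f y = y)

/-- An interval swap map of type `a` on `[p, q)`: it interchanges two
disjoint half-open intervals of length `a` by translation, fixing the
rest of the line. -/
def IsIntervalSwap (p q a : ℝ) (f : ℝ → ℝ) : Prop :=
  0 < a ∧ ∃ x y : ℝ, p ≤ x ∧ x + a ≤ y ∧ y + a ≤ q ∧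
    (∀ z ∈ Set.Ico x (x + a), f z = z + (y - x)) ∧
    (∀ z ∈ Set.Ico y (y + a), f z = z - (y - x)) ∧
    (∀ z, z ∉ Set.Ico x (x + a) ∪ Set.Ico y (y + a) → f z = z)

/-- `f` is a finite product (composition) of interval swap maps on `[p, q)`. -/
def IsSwapProduct (p q : ℝ) (f : ℝ → ℝ) : Prop :=
  ∃ L : List (ℝ → ℝ), (∀ g ∈ L, ∃ a, IsIntervalSwap p q a g) ∧
    f = L.foldr (· ∘ ·) id

/-- `ξ ∈ ℝ ⊗[ℚ] ℝ` is the SAF sum of `f` computed from some partition of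
`[p, q)` into half-open intervals on each of which `f` is a translation. -/
def HasSAF (p q : ℝ) (f : ℝ → ℝ) (ξ : ℝ ⊗[ℚ] ℝ) : Prop :=
  ∃ (n : ℕ) (pt : Fin (n + 1) → ℝ) (t : Fin n → ℝ),
    StrictMono pt ∧ pt 0 = p ∧ pt (Fin.last n) = q ∧
    (∀ i : Fin n, ∀ x ∈ Set.Ico (pt i.castSucc) (pt i.succ), f x = x + t i) ∧
    ξ = ∑ i : Fin n, (pt i.succ - pt i.castSucc) ⊗ₜ[ℚ] t i


namespace SAFAux

noncomputable def wedgeSpan : Submodule ℚ (ℝ ⊗[ℚ] ℝ) :=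
  Submodule.span ℚ {z : ℝ ⊗[ℚ] ℝ | ∃ a b : ℝ, z = a ⊗ₜ[ℚ] b - b ⊗ₜ[ℚ] a}

lemma sub_comm_mem (η : ℝ ⊗[ℚ] ℝ) :
    η - TensorProduct.comm ℚ ℝ ℝ η ∈ wedgeSpan := by
  induction η using TensorProduct.induction_on with
  | zero => simpa using Submodule.zero_mem _
  | tmul a b =>
      exact Submodule.subset_span ⟨a, b, by simp [TensorProduct.comm_tmul]⟩
  | add x y hx hy =>
      have h : (x + y) - TensorProduct.comm ℚ ℝ ℝ (x + y)
          = (x - TensorProduct.comm ℚ ℝ ℝ x) + (y - TensorProduct.comm ℚ ℝ ℝ y) := by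
        rw [map_add]; abel
      rw [h]; exact Submodule.add_mem _ hx hy

lemma antisym_mem {ξ : ℝ ⊗[ℚ] ℝ} (h : ξ + TensorProduct.comm ℚ ℝ ℝ ξ = 0) :
    ξ ∈ wedgeSpan := by
  have hc : TensorProduct.comm ℚ ℝ ℝ ξ = -ξ := by linear_combination h
  have h2 : ξ = (2:ℚ)⁻¹ • (ξ - TensorProduct.comm ℚ ℝ ℝ ξ) := by
    rw [hc]
    rw [sub_neg_eq_add, ← two_smul ℚ ξ, smul_smul]
    norm_num
  rw [h2]
  exact Submodule.smul_mem _ _ (sub_comm_mem ξ)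

lemma fin_telescope {M : Type*} [AddCommGroup M] {n : ℕ} (pt : Fin (n+1) → ℝ) (g : ℝ → M) :
    ∑ i : Fin n, (g (pt i.succ) - g (pt i.castSucc)) = g (pt (Fin.last n)) - g (pt 0) := by
  have key : ∀ i : Fin n,
      g (pt i.succ) - g (pt i.castSucc)
        = (fun j : ℕ => g (pt ⟨min j n, by omega⟩)) (i.val + 1)
          - (fun j : ℕ => g (pt ⟨min j n, by omega⟩)) i.val := by
    intro i
    have h1 : (⟨min (i.val+1) n, by omega⟩ : Fin (n+1)) = i.succ := by
      ext; simp [Nat.min_eq_left i.isLt]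
    have h2 : (⟨min i.val n, by omega⟩ : Fin (n+1)) = i.castSucc := by
      ext; simp [Nat.min_eq_left (le_of_lt i.isLt)]
    simp only [h1, h2]
  calc ∑ i : Fin n, (g (pt i.succ) - g (pt i.castSucc))
      = ∑ i : Fin n, ((fun j : ℕ => g (pt ⟨min j n, by omega⟩)) (i.val + 1)
          - (fun j : ℕ => g (pt ⟨min j n, by omega⟩)) i.val) := by
        exact Finset.sum_congr rfl fun i _ => key i
    _ = ∑ j ∈ Finset.range n, ((fun j : ℕ => g (pt ⟨min j n, by omega⟩)) (j + 1)
          - (fun j : ℕ => g (pt ⟨min j n, by omega⟩)) j) := by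
        rw [← Fin.sum_univ_eq_sum_range]
    _ = g (pt (Fin.last n)) - g (pt 0) := by
        rw [Finset.sum_range_sub (fun j : ℕ => g (pt ⟨min j n, by omega⟩)) n]
        have e1 : (⟨min n n, by omega⟩ : Fin (n+1)) = Fin.last n := by
          ext; simp [Fin.last]
        have e2 : (⟨min 0 n, by omega⟩ : Fin (n+1)) = 0 := by
          ext; simp
        rw [e1, e2]


lemma tiling_telescope {ι : Type*} [DecidableEq ι] {M : Type*} [AddCommGroup M] (g : ℝ → M)
    (v e : ι → ℝ) :
    ∀ (s : Finset ι) (p q : ℝ), p ≤ q →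
    (∀ i ∈ s, v i < e i) →
    ((s : Set ι).PairwiseDisjoint fun i => Set.Ico (v i) (e i)) →
    (⋃ i ∈ s, Set.Ico (v i) (e i)) = Set.Ico p q →
    ∑ i ∈ s, (g (e i) - g (v i)) = g q - g p := by
  intro s
  induction s using Finset.strongInductionOn with
  | _ s ih =>
    intro p q hpq hlt hdisj hun
    rcases eq_or_lt_of_le hpq with hpq' | hpq'
    · -- p = q : s must be empty
      subst hpq'
      have hs : s = ∅ := by
        by_contra hne
        obtain ⟨i, hi⟩ := Finset.nonempty_of_ne_empty hne
        have : v i ∈ (⋃ j ∈ s, Set.Ico (v j) (e j)) :=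
          Set.mem_biUnion hi ⟨le_refl _, hlt i hi⟩
        rw [hun] at this
        exact absurd this (by simp)
      simp [hs]
    · -- p < q
      have hpmem : p ∈ ⋃ j ∈ s, Set.Ico (v j) (e j) := by
        rw [hun]; exact ⟨le_refl _, hpq'⟩
      obtain ⟨i, hi, hpi⟩ := Set.mem_iUnion₂.mp hpmem
      have hvq : v i ∈ Set.Ico p q := by
        rw [← hun]; exact Set.mem_biUnion hi ⟨le_refl _, hlt i hi⟩
      have hvip : v i = p := le_antisymm hpi.1 hvq.1
      have heiq : e i ≤ q := by
        by_contra h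
        push_neg at h
        have : q ∈ Set.Ico (v i) (e i) := ⟨hvip ▸ hpq'.le, h⟩
        have : q ∈ Set.Ico p q := by rw [← hun]; exact Set.mem_biUnion hi this
        exact absurd this.2 (lt_irrefl q)
      have hunE : (⋃ j ∈ s.erase i, Set.Ico (v j) (e j)) = Set.Ico (e i) q := by
        ext x
        constructor
        · rintro hx
          obtain ⟨j, hj, hxj⟩ := Set.mem_iUnion₂.mp hx
          have hjs : j ∈ s := Finset.mem_of_mem_erase hj
          have hxpq : x ∈ Set.Ico p q := by
            rw [← hun]; exact Set.mem_biUnion hjs hxj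
          have hdis : Disjoint (Set.Ico (v j) (e j)) (Set.Ico (v i) (e i)) :=
            hdisj hjs hi (Finset.ne_of_mem_erase hj)
          have hxnoti : x ∉ Set.Ico (v i) (e i) :=
            Set.disjoint_left.mp hdis hxj
          have : e i ≤ x := by
            by_contra h
            push_neg at h
            exact hxnoti ⟨hvip ▸ hxpq.1, h⟩
          exact ⟨this, hxpq.2⟩
        · rintro ⟨hex, hxq⟩
          have hxpq : x ∈ Set.Ico p q := ⟨le_trans (hvip ▸ (hlt i hi).le) hex, hxq⟩
          rw [← hun] at hxpq
          obtain ⟨j, hj, hxj⟩ := Set.mem_iUnion₂.mp hxpq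
          have hji : j ≠ i := by
            rintro rfl
            exact absurd hxj.2 (not_lt.mpr hex)
          exact Set.mem_biUnion (Finset.mem_erase.mpr ⟨hji, hj⟩) hxj
      have hsum := ih (s.erase i) (Finset.erase_ssubset hi) (e i) q heiq
        (fun j hj => hlt j (Finset.mem_of_mem_erase hj))
        (hdisj.subset (by simp [Finset.erase_subset])) hunE
      rw [← Finset.sum_erase_add s _ hi, hsum, hvip]
      abel

lemma pieces_cover {n : ℕ} (pt : Fin (n+1) → ℝ) (hm : StrictMono pt) :
    (⋃ i : Fin n, Set.Ico (pt i.castSucc) (pt i.succ)) = Set.Ico (pt 0) (pt (Fin.last n)) := by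
  ext x
  constructor
  · rintro hx
    obtain ⟨i, hxi⟩ := Set.mem_iUnion.mp hx
    exact ⟨le_trans (hm.monotone (Fin.zero_le _)) hxi.1,
      lt_of_lt_of_le hxi.2 (hm.monotone (Fin.le_last _))⟩
  · rintro ⟨hpx, hxq⟩
    classical
    set T : Finset (Fin (n+1)) := Finset.univ.filter (fun j => pt j ≤ x) with hT
    have hT0 : (0 : Fin (n+1)) ∈ T := by simp [hT, hpx]
    have hTne : T.Nonempty := ⟨0, hT0⟩
    set j := T.max' hTne with hj
    have hjx : pt j ≤ x := by
      have := T.max'_mem hTne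
      simpa [hT] using this
    have hjlast : j ≠ Fin.last n := by
      rintro h
      rw [h] at hjx
      exact absurd (lt_of_le_of_lt hjx hxq) (lt_irrefl _)
    have hjlt : j.val < n := by
      rcases lt_or_eq_of_le (Nat.lt_succ_iff.mp j.isLt) with h | h
      · exact h
      · exact absurd (Fin.ext h : j = Fin.last n) hjlast
    refine Set.mem_iUnion.mpr ⟨⟨j.val, hjlt⟩, ?_, ?_⟩
    · simpa [Fin.castSucc] using hjx
    · by_contra h
      push_neg at h
      have hmem : (⟨j.val, hjlt⟩ : Fin n).succ ∈ T := by
        simp only [hT, Finset.mem_filter, Finset.mem_univ, true_and]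
        exact h
      have hle := T.le_max' _ hmem
      rw [← hj] at hle
      have : j < (⟨j.val, hjlt⟩ : Fin n).succ := by
        simp [Fin.lt_def]
      exact absurd (lt_of_lt_of_le this hle) (lt_irrefl _)


lemma image_translate (f : ℝ → ℝ) (a b t : ℝ) (hf : ∀ x ∈ Set.Ico a b, f x = x + t) :
    f '' Set.Ico a b = Set.Ico (a + t) (b + t) := by
  ext y
  constructor
  · rintro ⟨x, hx, rfl⟩
    rw [hf x hx]
    exact ⟨by linarith [hx.1], by linarith [hx.2]⟩
  · rintro ⟨h1, h2⟩
    refine ⟨y - t, ⟨by linarith, by linarith⟩, ?_⟩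
    rw [hf (y - t) ⟨by linarith, by linarith⟩]; ring

lemma saf_antisym {p q : ℝ} {f : ℝ → ℝ} {ξ : ℝ ⊗[ℚ] ℝ}
    (hb : Set.BijOn f (Set.Ico p q) (Set.Ico p q)) (h : HasSAF p q f ξ) :
    ξ + TensorProduct.comm ℚ ℝ ℝ ξ = 0 := by
  obtain ⟨n, pt, t, hm, h0, hl, ht, hξ⟩ := h
  have hpq : p ≤ q := by rw [← h0, ← hl]; exact hm.monotone (Fin.zero_le _)
  -- pieces
  set P : Fin n → Set ℝ := fun i => Set.Ico (pt i.castSucc) (pt i.succ) with hP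
  have hcover : (⋃ i : Fin n, P i) = Set.Ico p q := by
    rw [hP]; rw [pieces_cover pt hm, h0, hl]
  have hPsub : ∀ i, P i ⊆ Set.Ico p q := fun i => by
    rw [← hcover]; exact Set.subset_iUnion P i
  have hPdisj : (Set.univ : Set (Fin n)).PairwiseDisjoint P := by
    intro i _ j _ hij
    rcases lt_or_gt_of_ne hij with hlt | hlt
    · have : pt i.succ ≤ pt j.castSucc := hm.monotone (by
        rw [Fin.succ_le_castSucc_iff]; exact hlt)
      exact Set.disjoint_left.mpr (fun x hx hx' => absurd (lt_of_lt_of_le hx.2 (le_trans this hx'.1)) (lt_irrefl _))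
    · have : pt j.succ ≤ pt i.castSucc := hm.monotone (by
        rw [Fin.succ_le_castSucc_iff]; exact hlt)
      exact Set.disjoint_right.mpr (fun x hx hx' => absurd (lt_of_lt_of_le hx.2 (le_trans this hx'.1)) (lt_irrefl _))
  -- images
  have himg : ∀ i : Fin n, f '' P i = Set.Ico (pt i.castSucc + t i) (pt i.succ + t i) :=
    fun i => image_translate f _ _ _ (ht i)
  have hJdisj : (Set.univ : Set (Fin n)).PairwiseDisjoint
      (fun i => Set.Ico (pt i.castSucc + t i) (pt i.succ + t i)) := by
    intro i _ j _ hij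
    simp only [Function.onFun]
    rw [Set.disjoint_left]
    intro z hzi hzj
    rw [← himg i] at hzi
    rw [← himg j] at hzj
    obtain ⟨x, hx, rfl⟩ := hzi
    obtain ⟨y, hy, hxy⟩ := hzj
    have := hb.injOn (hPsub j hy) (hPsub i hx) hxy
    subst this
    exact Set.disjoint_left.mp (hPdisj (Set.mem_univ i) (Set.mem_univ j) hij) hx hy
  have hJun : (⋃ i ∈ (Finset.univ : Finset (Fin n)),
      Set.Ico (pt i.castSucc + t i) (pt i.succ + t i)) = Set.Ico p q := by
    simp only [Finset.mem_univ, Set.iUnion_true]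
    calc (⋃ i : Fin n, Set.Ico (pt i.castSucc + t i) (pt i.succ + t i))
        = ⋃ i : Fin n, f '' P i := by
          exact Set.iUnion_congr fun i => (himg i).symm
      _ = f '' ⋃ i, P i := (Set.image_iUnion).symm
      _ = f '' Set.Ico p q := by rw [hcover]
      _ = Set.Ico p q := hb.image_eq
  -- the two telescoping identities for g x = x ⊗ x
  set g : ℝ → ℝ ⊗[ℚ] ℝ := fun x => x ⊗ₜ[ℚ] x with hg
  have key1 : ∑ i : Fin n, (g (pt i.succ + t i) - g (pt i.castSucc + t i)) = g q - g p := by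
    apply tiling_telescope g (fun i => pt i.castSucc + t i) (fun i => pt i.succ + t i)
      Finset.univ p q hpq
    · intro i _
      have := hm (Fin.castSucc_lt_succ (i := i))
      linarith
    · simpa using hJdisj
    · exact hJun
  have key2 : ∑ i : Fin n, (g (pt i.succ) - g (pt i.castSucc)) = g q - g p := by
    rw [fin_telescope pt g, h0, hl]
  have key : ∑ i : Fin n, ((g (pt i.succ + t i) - g (pt i.castSucc + t i))
      - (g (pt i.succ) - g (pt i.castSucc))) = 0 := by
    rw [Finset.sum_sub_distrib, key1, key2, sub_self]
  have expand : ∀ i : Fin n,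
      (g (pt i.succ + t i) - g (pt i.castSucc + t i)) - (g (pt i.succ) - g (pt i.castSucc))
        = (pt i.succ - pt i.castSucc) ⊗ₜ[ℚ] t i + t i ⊗ₜ[ℚ] (pt i.succ - pt i.castSucc) := by
    intro i
    simp only [hg, TensorProduct.add_tmul, TensorProduct.tmul_add,
      TensorProduct.sub_tmul, TensorProduct.tmul_sub]
    abel
  rw [hξ, map_sum]
  simp only [TensorProduct.comm_tmul]
  rw [← Finset.sum_add_distrib]
  rw [← key]
  exact Finset.sum_congr rfl fun i _ => (expand i).symm


lemma hasSAF_glue {u r v : ℝ} {f f₁ f₂ : ℝ → ℝ} {ξ₁ ξ₂ : ℝ ⊗[ℚ] ℝ}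
    (h₁ : HasSAF u r f₁ ξ₁) (h₂ : HasSAF r v f₂ ξ₂)
    (hf₁ : ∀ x ∈ Set.Ico u r, f x = f₁ x) (hf₂ : ∀ x ∈ Set.Ico r v, f x = f₂ x) :
    HasSAF u v f (ξ₁ + ξ₂) := by
  obtain ⟨n₁, pt₁, t₁, hm₁, h0₁, hl₁, ht₁, hξ₁⟩ := h₁
  obtain ⟨n₂, pt₂, t₂, hm₂, h0₂, hl₂, ht₂, hξ₂⟩ := h₂
  classical
  set PT : ℕ → ℝ := fun j =>
    if h : j ≤ n₁ then pt₁ ⟨j, by omega⟩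
    else if h2 : j ≤ n₁ + n₂ then pt₂ ⟨j - n₁, by omega⟩ else 0 with hPT
  set T : ℕ → ℝ := fun j =>
    if h : j < n₁ then t₁ ⟨j, h⟩
    else if h2 : j - n₁ < n₂ then t₂ ⟨j - n₁, h2⟩ else 0 with hT
  have F1 : ∀ j (h : j ≤ n₁), PT j = pt₁ ⟨j, by omega⟩ := by
    intro j h; simp only [hPT, dif_pos h]
  have F2 : ∀ i (h : i ≤ n₂), PT (n₁ + i) = pt₂ ⟨i, by omega⟩ := by
    intro i h
    rcases Nat.eq_zero_or_pos i with rfl | hi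
    · have : PT (n₁ + 0) = pt₁ ⟨n₁, by omega⟩ := F1 _ (by omega)
      rw [this]
      have e1 : pt₁ ⟨n₁, by omega⟩ = pt₁ (Fin.last n₁) := rfl
      have e2 : pt₂ ⟨0, by omega⟩ = pt₂ 0 := rfl
      rw [e1, e2, hl₁, h0₂]
    · simp only [hPT]
      rw [dif_neg (by omega), dif_pos (by omega)]
      congr 1
      ext
      simp
  refine ⟨n₁ + n₂, fun k => PT k.val, fun k => T k.val, ?_, ?_, ?_, ?_, ?_⟩
  · -- StrictMono
    rw [Fin.strictMono_iff_lt_succ]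
    intro k
    simp only [Fin.coe_castSucc, Fin.val_succ]
    rcases lt_or_ge k.val n₁ with hk | hk
    · rw [F1 k.val (by omega), F1 (k.val + 1) (by omega)]
      exact hm₁ (by simp [Fin.lt_def])
    · have hk2 : k.val < n₁ + n₂ := k.isLt
      have e1 : PT k.val = pt₂ ⟨k.val - n₁, by omega⟩ := by
        have := F2 (k.val - n₁) (by omega)
        rwa [show n₁ + (k.val - n₁) = k.val from by omega] at this
      have e2 : PT (k.val + 1) = pt₂ ⟨k.val - n₁ + 1, by omega⟩ := by
        have := F2 (k.val - n₁ + 1) (by omega)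
        rwa [show n₁ + (k.val - n₁ + 1) = k.val + 1 from by omega] at this
      rw [e1, e2]
      exact hm₂ (by simp [Fin.lt_def])
  · -- left endpoint
    show PT 0 = u
    rw [F1 0 (by omega)]
    rw [show (⟨0, by omega⟩ : Fin (n₁+1)) = 0 from rfl, h0₁]
  · -- right endpoint
    show PT (n₁ + n₂) = v
    rw [F2 n₂ le_rfl]
    rw [show (⟨n₂, by omega⟩ : Fin (n₂+1)) = Fin.last n₂ from rfl, hl₂]
  · -- translations
    intro i x hx
    simp only [Fin.coe_castSucc, Fin.val_succ] at hx
    rcases lt_or_ge i.val n₁ with hk | hk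
    · set j : Fin n₁ := ⟨i.val, hk⟩ with hj
      have e1 : PT i.val = pt₁ j.castSucc := F1 i.val (by omega)
      have e2 : PT (i.val + 1) = pt₁ j.succ := F1 (i.val + 1) (by omega)
      rw [e1, e2] at hx
      have hxur : x ∈ Set.Ico u r := by
        constructor
        · calc u = pt₁ 0 := h0₁.symm
            _ ≤ pt₁ j.castSucc := hm₁.monotone (Fin.zero_le _)
            _ ≤ x := hx.1
        · calc x < pt₁ j.succ := hx.2
            _ ≤ pt₁ (Fin.last n₁) := hm₁.monotone (Fin.le_last _)
            _ = r := hl₁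
      rw [hf₁ x hxur, ht₁ j x hx]
      congr 1
      simp only [hT, dif_pos hk]
      rfl
    · have hk2 : i.val < n₁ + n₂ := i.isLt
      set j : Fin n₂ := ⟨i.val - n₁, by omega⟩ with hj
      have e1 : PT i.val = pt₂ j.castSucc := by
        have := F2 (i.val - n₁) (by omega)
        rwa [show n₁ + (i.val - n₁) = i.val from by omega] at this
      have e2 : PT (i.val + 1) = pt₂ j.succ := by
        have := F2 (i.val - n₁ + 1) (by omega)
        rwa [show n₁ + (i.val - n₁ + 1) = i.val + 1 from by omega] at this
      rw [e1, e2] at hx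
      have hxrv : x ∈ Set.Ico r v := by
        constructor
        · calc r = pt₂ 0 := h0₂.symm
            _ ≤ pt₂ j.castSucc := hm₂.monotone (Fin.zero_le _)
            _ ≤ x := hx.1
        · calc x < pt₂ j.succ := hx.2
            _ ≤ pt₂ (Fin.last n₂) := hm₂.monotone (Fin.le_last _)
            _ = v := hl₂
      rw [hf₂ x hxrv, ht₂ j x hx]
      congr 1
      simp only [hT, dif_neg (by omega : ¬ i.val < n₁), dif_pos (show i.val - n₁ < n₂ from by omega)]
      rfl
  · -- the sum
    set G : ℕ → ℝ ⊗[ℚ] ℝ := fun j => (PT (j+1) - PT j) ⊗ₜ[ℚ] T j with hG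
    have main : ∑ k : Fin (n₁ + n₂),
        ((fun k : Fin (n₁+n₂+1) => PT k.val) (Fin.succ k) -
         (fun k : Fin (n₁+n₂+1) => PT k.val) (Fin.castSucc k)) ⊗ₜ[ℚ] T k.val
        = ∑ j ∈ Finset.range (n₁ + n₂), G j := by
      rw [← Fin.sum_univ_eq_sum_range G (n₁ + n₂)]
      exact Finset.sum_congr rfl fun k _ => rfl
    rw [hξ₁, hξ₂, main, Finset.sum_range_add G n₁ n₂]
    congr 1
    · rw [← Fin.sum_univ_eq_sum_range G n₁]
      apply Finset.sum_congr rfl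
      intro i _
      simp only [hG]
      rw [F1 i.val (by omega), F1 (i.val + 1) (by omega)]
      have : T i.val = t₁ i := by simp only [hT, dif_pos i.isLt]
      rw [this]
      rfl
    · rw [← Fin.sum_univ_eq_sum_range (fun j => G (n₁ + j)) n₂]
      apply Finset.sum_congr rfl
      intro i _
      simp only [hG]
      rw [F2 i.val (by omega), show n₁ + i.val + 1 = n₁ + (i.val + 1) from by omega,
        F2 (i.val + 1) (by omega)]
      have : T (n₁ + i.val) = t₂ i := by
        simp only [hT]
        rw [dif_neg (by omega), dif_pos (show n₁ + i.val - n₁ < n₂ from by omega)]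
        congr 1
        ext
        simp
      rw [this]
      rfl


def Realizes (u v : ℝ) (f : ℝ → ℝ) (ξ : ℝ ⊗[ℚ] ℝ) : Prop :=
  Set.BijOn f (Set.Ico u v) (Set.Ico u v) ∧ (∀ x, x ∉ Set.Ico u v → f x = x) ∧
  HasSAF u v f ξ

lemma realize_zero {u v : ℝ} (huv : u < v) : Realizes u v id 0 := by
  refine ⟨Set.bijOn_id _, fun x _ => rfl, 1, ![u, v], fun _ => 0, ?_, rfl, rfl, ?_, ?_⟩
  · rw [Fin.strictMono_iff_lt_succ]
    intro i
    fin_cases i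
    simpa using huv
  · intro i x _
    simp
  · simp

lemma realize_rot {u v ℓ s : ℝ} (huv : u < v) (hs : 0 < s) (hsl : s < ℓ) (hl : ℓ < v - u) :
    ∃ f : ℝ → ℝ, Realizes u v f (ℓ ⊗ₜ[ℚ] s - s ⊗ₜ[ℚ] ℓ) := by
  classical
  set f : ℝ → ℝ := fun x =>
    if u ≤ x ∧ x < u + (ℓ - s) then x + s
    else if u + (ℓ - s) ≤ x ∧ x < u + ℓ then x - (ℓ - s) else x with hf
  set g : ℝ → ℝ := fun x =>
    if u ≤ x ∧ x < u + s then x + (ℓ - s)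
    else if u + s ≤ x ∧ x < u + ℓ then x - s else x with hg
  have hfval : ∀ x, f x =
      if u ≤ x ∧ x < u + (ℓ - s) then x + s
      else if u + (ℓ - s) ≤ x ∧ x < u + ℓ then x - (ℓ - s) else x := fun x => rfl
  have hgval : ∀ x, g x =
      if u ≤ x ∧ x < u + s then x + (ℓ - s)
      else if u + s ≤ x ∧ x < u + ℓ then x - s else x := fun x => rfl
  have hmapsf : Set.MapsTo f (Set.Ico u v) (Set.Ico u v) := by
    intro x hx
    rw [hfval]
    split_ifs with h1 h2
    · exact ⟨by linarith [hx.1], by linarith [h1.2]⟩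
    · exact ⟨by linarith [h2.1], by linarith [hx.2]⟩
    · exact hx
  have hmapsg : Set.MapsTo g (Set.Ico u v) (Set.Ico u v) := by
    intro x hx
    rw [hgval]
    split_ifs with h1 h2
    · exact ⟨by linarith [hx.1], by linarith [h1.2]⟩
    · exact ⟨by linarith [h2.1], by linarith [hx.2]⟩
    · exact hx
  have hinv : Set.InvOn g f (Set.Ico u v) (Set.Ico u v) := by
    constructor
    · intro x hx
      rw [hfval]
      split_ifs with h1 h2
      · rw [hgval,
          if_neg (by push_neg; intro _; linarith [h1.1]),
          if_pos ⟨by linarith [h1.1], by linarith [h1.2]⟩]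
        ring
      · rw [hgval,
          if_pos ⟨by linarith [h2.1], by linarith [h2.2]⟩]
        ring
      · push_neg at h1 h2
        have hxl : u + ℓ ≤ x := by
          by_contra hc
          push_neg at hc
          rcases le_or_gt (u + (ℓ - s)) x with h | h
          · exact absurd (h2 h) (not_le.mpr hc)
          · exact absurd (h1 hx.1) (not_le.mpr h)
        rw [hgval,
          if_neg (by push_neg; intro _; linarith),
          if_neg (by push_neg; intro _; linarith)]
    · intro x hx
      rw [hgval]
      split_ifs with h1 h2
      · rw [hfval,
          if_neg (by push_neg; intro _; linarith [h1.1]),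
          if_pos ⟨by linarith [h1.1], by linarith [h1.2]⟩]
        ring
      · rw [hfval,
          if_pos ⟨by linarith [h2.1], by linarith [h2.2]⟩]
        ring
      · push_neg at h1 h2
        have hxl : u + ℓ ≤ x := by
          by_contra hc
          push_neg at hc
          rcases le_or_gt (u + s) x with h | h
          · exact absurd (h2 h) (not_le.mpr hc)
          · exact absurd (h1 hx.1) (not_le.mpr h)
        rw [hfval,
          if_neg (by push_neg; intro _; linarith),
          if_neg (by push_neg; intro _; linarith)]
  set PT : ℕ → ℝ := fun j =>
    if j = 0 then u else if j = 1 then u + (ℓ - s) else if j = 2 then u + ℓ else v with hPT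
  set TT : ℕ → ℝ := fun j => if j = 0 then s else if j = 1 then s - ℓ else 0 with hTT
  refine ⟨f, hinv.bijOn hmapsf hmapsg, ?_, ?_⟩
  · intro x hx
    simp only [Set.mem_Ico, not_and, not_lt] at hx
    rw [hfval]
    rcases lt_or_ge x u with h | h
    · rw [if_neg (by push_neg; intro _; linarith), if_neg (by push_neg; intro _; linarith)]
    · have := hx h
      rw [if_neg (by push_neg; intro _; linarith), if_neg (by push_neg; intro _; linarith)]
  · refine ⟨3, fun k => PT k.val, fun k => TT k.val, ?_, ?_, ?_, ?_, ?_⟩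
    · rw [Fin.strictMono_iff_lt_succ]
      intro i
      simp only [Fin.coe_castSucc, Fin.val_succ]
      fin_cases i <;> simp only [hPT] <;> norm_num <;> linarith
    · show PT 0 = u
      simp [hPT]
    · show PT 3 = v
      simp [hPT]
    · intro i x hx
      simp only [Fin.coe_castSucc, Fin.val_succ] at hx
      fin_cases i
      · simp only [hPT] at hx; norm_num at hx
        rw [hfval, if_pos ⟨hx.1, hx.2⟩]
        simp [hTT]
      · simp only [hPT] at hx; norm_num at hx
        rw [hfval, if_neg (by push_neg; intro _; linarith [hx.1]),
          if_pos ⟨hx.1, hx.2⟩]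
        simp only [hTT]
        norm_num
        ring
      · simp only [hPT] at hx; norm_num at hx
        rw [hfval, if_neg (by push_neg; intro _; linarith [hx.1]),
          if_neg (by push_neg; intro _; linarith [hx.1])]
        simp [hTT]
    · rw [Fin.sum_univ_three]
      norm_num [hPT, hTT, Fin.val_succ, Fin.coe_castSucc]
      rw [TensorProduct.sub_tmul, TensorProduct.tmul_sub]
      abel


lemma realize_wedge_pos {u v a : ℝ} (b : ℝ) (huv : u < v) (ha : 0 < a) :
    ∃ f : ℝ → ℝ, Realizes u v f (a ⊗ₜ[ℚ] b - b ⊗ₜ[ℚ] a) := by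
  obtain ⟨N, hN⟩ := exists_rat_gt (max (a / (v - u)) 0)
  have hN0' : (0:ℝ) < (N:ℝ) := lt_of_le_of_lt (le_max_right _ _) hN
  have hvu : (0:ℝ) < v - u := sub_pos.mpr huv
  set ℓ : ℝ := a / (N:ℝ) with hℓdef
  have hℓ : 0 < ℓ := div_pos ha hN0'
  have hℓlt : ℓ < v - u := by
    rw [hℓdef, div_lt_iff₀ hN0']
    have h1 : a / (v - u) < (N:ℝ) := lt_of_le_of_lt (le_max_left _ _) hN
    calc a = (a / (v - u)) * (v - u) := by field_simp
      _ < (N:ℝ) * (v - u) := by apply mul_lt_mul_of_pos_right h1 hvu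
      _ = (v - u) * (N:ℝ) := by ring
  set b' : ℝ := (N:ℝ) * b with hb'
  set j : ℤ := ⌊b' / ℓ⌋ with hj
  set s : ℝ := b' - (j:ℝ) * ℓ with hsdef
  have hs0 : 0 ≤ s := by
    rw [hsdef, sub_nonneg]
    calc (j:ℝ) * ℓ ≤ (b' / ℓ) * ℓ := mul_le_mul_of_nonneg_right (Int.floor_le _) hℓ.le
      _ = b' := by field_simp
  have hsℓ : s < ℓ := by
    rw [hsdef, sub_lt_iff_lt_add]
    calc b' = (b' / ℓ) * ℓ := by field_simp
      _ < ((j:ℝ) + 1) * ℓ := mul_lt_mul_of_pos_right (Int.lt_floor_add_one _) hℓ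
      _ = ℓ + (j:ℝ) * ℓ := by ring
  have key : a ⊗ₜ[ℚ] b - b ⊗ₜ[ℚ] a = ℓ ⊗ₜ[ℚ] s - s ⊗ₜ[ℚ] ℓ := by
    have haℓ : a = N • ℓ := by
      rw [Rat.smul_def, hℓdef]
      field_simp
    have hb'eq : b' = (N:ℚ) • b := by rw [Rat.smul_def, hb']
    have hjℓ : (j:ℝ) * ℓ = ((j:ℚ)) • ℓ := by
      rw [Rat.smul_def]
      norm_num
    have e1 : a ⊗ₜ[ℚ] b = ℓ ⊗ₜ[ℚ] b' := by
      rw [haℓ, hb'eq, TensorProduct.smul_tmul]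
    have e2 : b ⊗ₜ[ℚ] a = b' ⊗ₜ[ℚ] ℓ := by
      rw [haℓ, hb'eq, ← TensorProduct.smul_tmul]
    rw [e1, e2]
    have hb's : b' = s + (j:ℚ) • ℓ := by rw [hsdef, ← hjℓ]; ring
    rw [hb's, TensorProduct.tmul_add, TensorProduct.add_tmul,
      TensorProduct.tmul_smul, TensorProduct.smul_tmul']
    abel
  rw [key]
  rcases eq_or_lt_of_le hs0 with hs | hs
  · refine ⟨id, ?_⟩
    rw [← hs]
    simpa using realize_zero huv
  · exact realize_rot huv hs hsℓ hℓlt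

lemma realize_wedge (a b : ℝ) {u v : ℝ} (huv : u < v) :
    ∃ f : ℝ → ℝ, Realizes u v f (a ⊗ₜ[ℚ] b - b ⊗ₜ[ℚ] a) := by
  rcases lt_trichotomy a 0 with ha | ha | ha
  · obtain ⟨f, hf⟩ := realize_wedge_pos (-b) huv (neg_pos.mpr ha)
    refine ⟨f, ?_⟩
    have : (-a) ⊗ₜ[ℚ] (-b) - (-b) ⊗ₜ[ℚ] (-a) = a ⊗ₜ[ℚ] b - b ⊗ₜ[ℚ] a := by
      rw [TensorProduct.neg_tmul, TensorProduct.tmul_neg, neg_neg,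
        TensorProduct.neg_tmul, TensorProduct.tmul_neg, neg_neg]
    rwa [this] at hf
  · subst ha
    refine ⟨id, ?_⟩
    have : (0:ℝ) ⊗ₜ[ℚ] b - b ⊗ₜ[ℚ] (0:ℝ) = 0 := by
      rw [TensorProduct.zero_tmul, TensorProduct.tmul_zero, sub_zero]
    rw [this]
    exact realize_zero huv
  · exact realize_wedge_pos b huv ha

lemma realize_glue {u r v : ℝ} {f₁ f₂ : ℝ → ℝ} {ξ₁ ξ₂ : ℝ ⊗[ℚ] ℝ}
    (hur : u < r) (hrv : r < v)
    (H₁ : Realizes u r f₁ ξ₁) (H₂ : Realizes r v f₂ ξ₂) :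
    ∃ f : ℝ → ℝ, Realizes u v f (ξ₁ + ξ₂) := by
  classical
  obtain ⟨hb₁, ho₁, hs₁⟩ := H₁
  obtain ⟨hb₂, ho₂, hs₂⟩ := H₂
  set f : ℝ → ℝ := fun x => if x < r then f₁ x else f₂ x with hfdef
  have hfval : ∀ x, f x = if x < r then f₁ x else f₂ x := fun _ => rfl
  have hf₁ : ∀ x ∈ Set.Ico u r, f x = f₁ x := fun x hx => if_pos hx.2
  have hf₂ : ∀ x ∈ Set.Ico r v, f x = f₂ x := fun x hx => if_neg (not_lt.mpr hx.1)
  have hbij1 : Set.BijOn f (Set.Ico u r) (Set.Ico u r) :=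
    hb₁.congr (fun x hx => (hf₁ x hx).symm)
  have hbij2 : Set.BijOn f (Set.Ico r v) (Set.Ico r v) :=
    hb₂.congr (fun x hx => (hf₂ x hx).symm)
  have hinj : Set.InjOn f (Set.Ico u r ∪ Set.Ico r v) := by
    intro x hx y hy hxy
    rcases hx with hx | hx <;> rcases hy with hy | hy
    · exact hbij1.injOn hx hy hxy
    · exfalso
      have h1 : f x ∈ Set.Ico u r := hbij1.mapsTo hx
      have h2 : f y ∈ Set.Ico r v := hbij2.mapsTo hy
      rw [hxy] at h1
      linarith [h1.2, h2.1]
    · exfalso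
      have h1 : f x ∈ Set.Ico r v := hbij2.mapsTo hx
      have h2 : f y ∈ Set.Ico u r := hbij1.mapsTo hy
      rw [hxy] at h1
      linarith [h1.1, h2.2]
    · exact hbij2.injOn hx hy hxy
  have hu : Set.Ico u r ∪ Set.Ico r v = Set.Ico u v :=
    Set.Ico_union_Ico_eq_Ico hur.le hrv.le
  refine ⟨f, ?_, ?_, hasSAF_glue hs₁ hs₂ hf₁ hf₂⟩
  · have := (hbij1.union hbij2 hinj)
    rwa [hu] at this
  · intro x hx
    simp only [Set.mem_Ico, not_and, not_lt] at hx
    rw [hfval]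
    split_ifs with h
    · apply ho₁
      simp only [Set.mem_Ico, not_and, not_lt]
      intro hux
      exact absurd (hx hux) (not_le.mpr (lt_of_lt_of_le h hrv.le))
    · apply ho₂
      simp only [Set.mem_Ico, not_and, not_lt]
      intro hrx
      exact hx (le_trans hur.le hrx)

noncomputable def wsum (L : List (ℝ × ℝ)) : ℝ ⊗[ℚ] ℝ :=
  (L.map fun ab => ab.1 ⊗ₜ[ℚ] ab.2 - ab.2 ⊗ₜ[ℚ] ab.1).sum

lemma realize_list : ∀ (L : List (ℝ × ℝ)) (u v : ℝ), u < v →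
    ∃ f : ℝ → ℝ, Realizes u v f (wsum L) := by
  intro L
  induction L with
  | nil =>
    intro u v huv
    exact ⟨id, realize_zero huv⟩
  | cons ab L ih =>
    intro u v huv
    have hmid1 : u < (u + v) / 2 := by linarith
    have hmid2 : (u + v) / 2 < v := by linarith
    obtain ⟨f₁, hf₁⟩ := realize_wedge ab.1 ab.2 hmid1
    obtain ⟨f₂, hf₂⟩ := ih ((u + v) / 2) v hmid2
    obtain ⟨f, hf⟩ := realize_glue hmid1 hmid2 hf₁ hf₂
    exact ⟨f, hf⟩

lemma smul_wsum (c : ℚ) (L : List (ℝ × ℝ)) :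
    c • wsum L = wsum (L.map fun ab => (c • ab.1, ab.2)) := by
  induction L with
  | nil => simp [wsum]
  | cons ab L ih =>
    simp only [wsum, List.map_cons, List.sum_cons] at *
    rw [smul_add, ih, smul_sub, TensorProduct.smul_tmul', ← TensorProduct.tmul_smul]

lemma mem_span_wsum {ξ : ℝ ⊗[ℚ] ℝ}
    (h : ξ ∈ Submodule.span ℚ {z : ℝ ⊗[ℚ] ℝ | ∃ a b : ℝ, z = a ⊗ₜ[ℚ] b - b ⊗ₜ[ℚ] a}) :
    ∃ L : List (ℝ × ℝ), ξ = wsum L := by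
  induction h using Submodule.span_induction with
  | mem x hx =>
    obtain ⟨a, b, rfl⟩ := hx
    exact ⟨[(a, b)], by simp [wsum]⟩
  | zero => exact ⟨[], by simp [wsum]⟩
  | add x y hx hy ihx ihy =>
    obtain ⟨L₁, rfl⟩ := ihx
    obtain ⟨L₂, rfl⟩ := ihy
    refine ⟨L₁ ++ L₂, ?_⟩
    simp [wsum]
  | smul c x hx ihx =>
    obtain ⟨L, rfl⟩ := ihx
    exact ⟨L.map fun ab => (c • ab.1, ab.2), smul_wsum c L⟩


end SAFAux

/-- An element `ξ ∈ ℝ ⊗[ℚ] ℝ` is the SAF invariant of some interval exchange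
transformation of `[p, q)` if and only if it lies in `ℝ ∧[ℚ] ℝ`, the span of
the elements `a ⊗ b - b ⊗ a`. -/
theorem saf_range (p q : ℝ) (hpq : p < q) (ξ : ℝ ⊗[ℚ] ℝ) :
    (∃ f : ℝ → ℝ, IsIET p q f ∧ HasSAF p q f ξ) ↔
      ξ ∈ Submodule.span ℚ
        {z : ℝ ⊗[ℚ] ℝ | ∃ a b : ℝ, z = a ⊗ₜ[ℚ] b - b ⊗ₜ[ℚ] a} := by
  constructor
  · rintro ⟨f, hIET, hSAF⟩
    exact SAFAux.antisym_mem (SAFAux.saf_antisym hIET.1 hSAF)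
  · intro h
    obtain ⟨L, rfl⟩ := SAFAux.mem_span_wsum h
    obtain ⟨f, hb, hout, hsaf⟩ := SAFAux.realize_list L p q hpq
    refine ⟨f, ⟨hb, hout, ?_⟩, hsaf⟩
    obtain ⟨n, pt, t, hm, h0, hl, ht, -⟩ := hsaf
    exact ⟨n, pt, hm, h0, hl, fun i => ⟨t i, ht i⟩⟩
end

section
/- Given positive reals a, b and ε > 0, there exist positive reals a_0, b_0 with a_0 + b_0 < ε such that every restricted rotation f of type (a,b) on I = [p,q) (assuming a + b ≤ length of I) can be written as f = h ∘ g, where h is a restricted rotation of type (a_0, b_0) and g is a finite product of interval swap maps. -/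
open scoped TensorProduct

open Classical in
/-- Explicit restricted rotation of type `(a,b)` based at `x`. -/
noncomputable def rot (x a b : ℝ) : ℝ → ℝ := fun y =>
  if x ≤ y then
    if y < x + a then y + b
    else if y < x + a + b then y - a else y
  else y

lemma rot_isRR {p q a b x : ℝ} (ha : 0 < a) (hb : 0 < b)
    (h1 : p ≤ x) (h2 : x + a + b ≤ q) :
    IsRestrictedRotation p q a b (rot x a b) := by
  refine ⟨ha, hb, x, h1, h2, ?_, ?_, ?_⟩
  · intro y hy
    rw [Set.mem_Ico] at hy
    simp only [rot]
    rw [if_pos hy.1, if_pos hy.2]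
  · intro y hy
    rw [Set.mem_Ico] at hy
    simp only [rot]
    rw [if_pos (by linarith [hy.1] : x ≤ y), if_neg (not_lt.mpr hy.1), if_pos hy.2]
  · intro y hy
    rw [Set.mem_Ico] at hy
    push_neg at hy
    simp only [rot]
    rcases le_or_gt x y with h3 | h3
    · have h4 : x + a + b ≤ y := hy h3
      rw [if_pos h3, if_neg (by linarith), if_neg (not_lt.mpr h4)]
    · rw [if_neg (not_le.mpr h3)]

lemma IsRestrictedRotation.eq_rot {p q a b : ℝ} {f : ℝ → ℝ}
    (hf : IsRestrictedRotation p q a b f) :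
    ∃ x, p ≤ x ∧ x + a + b ≤ q ∧ f = rot x a b := by
  obtain ⟨ha, hb, x, hx1, hx2, hc1, hc2, hc3⟩ := hf
  refine ⟨x, hx1, hx2, funext fun y => ?_⟩
  simp only [rot]
  split_ifs with h1 h2 h3
  · exact hc1 y (Set.mem_Ico.mpr ⟨h1, h2⟩)
  · exact hc2 y (Set.mem_Ico.mpr ⟨not_lt.mp h2, h3⟩)
  · exact hc3 y (by rw [Set.mem_Ico]; rintro ⟨-, h5⟩; exact h3 h5)
  · exact hc3 y (by rw [Set.mem_Ico]; rintro ⟨h4, -⟩; exact h1 h4)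

lemma rot_isSwap {p q c x : ℝ} (hc : 0 < c) (h1 : p ≤ x) (h2 : x + c + c ≤ q) :
    IsIntervalSwap p q c (rot x c c) := by
  refine ⟨hc, x, x + c, h1, le_refl _, by linarith, ?_, ?_, ?_⟩
  · intro z hz
    rw [Set.mem_Ico] at hz
    simp only [rot]
    rw [if_pos hz.1, if_pos hz.2]
    ring
  · intro z hz
    rw [Set.mem_Ico] at hz
    simp only [rot]
    rw [if_pos (by linarith [hz.1] : x ≤ z), if_neg (not_lt.mpr hz.1),
      if_pos (by linarith [hz.2] : z < x + c + c)]
    ring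
  · intro z hz
    simp only [Set.mem_union, Set.mem_Ico, not_or, not_and, not_lt] at hz
    obtain ⟨hzA, hzB⟩ := hz
    simp only [rot]
    rcases le_or_gt x z with h3 | h3
    · have h4 := hzA h3
      have h5 := hzB (by linarith)
      rw [if_pos h3, if_neg (not_lt.mpr h4), if_neg (not_lt.mpr (by linarith))]
    · rw [if_neg (not_le.mpr h3)]

lemma rot_invol {x c : ℝ} (hc : 0 < c) : rot x c c ∘ rot x c c = id := by
  funext z
  simp only [rot, Function.comp, id]
  split_ifs <;> linarith

lemma rotA {x a b : ℝ} (ha : 0 < a) (hab : a < b) :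
    rot x a b = rot (x + a) a (b - a) ∘ rot x a a := by
  funext y
  simp only [rot, Function.comp]
  split_ifs <;> linarith

lemma rotB {x a b : ℝ} (hb : 0 < b) (hba : b < a) :
    rot x a b = rot x (a - b) b ∘ rot (x + (a - b)) b b := by
  funext y
  simp only [rot, Function.comp]
  split_ifs <;> linarith

lemma foldr_comp (L : List (ℝ → ℝ)) (e : ℝ → ℝ) :
    L.foldr (· ∘ ·) e = (L.foldr (· ∘ ·) id) ∘ e := by
  induction L with
  | nil => rfl
  | cons f L ih => simp only [List.foldr_cons, ih]; rfl

lemma swapProd_id (p q : ℝ) : IsSwapProduct p q id :=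
  ⟨[], by simp, rfl⟩

lemma swapProd_comp {p q c : ℝ} {g s : ℝ → ℝ} (hg : IsSwapProduct p q g)
    (hs : IsIntervalSwap p q c s) : IsSwapProduct p q (g ∘ s) := by
  obtain ⟨L, hL, rfl⟩ := hg
  refine ⟨L ++ [s], ?_, ?_⟩
  · intro g' hg'
    rcases List.mem_append.mp hg' with h | h
    · exact hL g' h
    · rw [List.mem_singleton] at h
      subst h
      exact ⟨c, hs⟩
  · rw [List.foldr_append]
    conv_rhs => rw [foldr_comp L (List.foldr (· ∘ ·) id [s])]
    rfl

/-- The target property: a uniform small-type factorization for type `(a,b)`. -/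
def Solv (p q ε a b : ℝ) : Prop :=
  ∃ a₀ b₀ : ℝ, 0 < a₀ ∧ 0 < b₀ ∧ a₀ + b₀ < ε ∧
    ∀ f : ℝ → ℝ, IsRestrictedRotation p q a b f →
      ∃ h g : ℝ → ℝ, IsRestrictedRotation p q a₀ b₀ h ∧
        IsSwapProduct p q g ∧ f = h ∘ g

lemma S1 {p q ε a b : ℝ} (ha : 0 < a) (hb : 0 < b) (hε : a + b < ε) :
    Solv p q ε a b :=
  ⟨a, b, ha, hb, hε, fun f hf => ⟨f, id, hf, swapProd_id p q, rfl⟩⟩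

lemma S2 {p q ε a : ℝ} (hpq : p < q) (hε : 0 < ε) (ha : 0 < a) :
    Solv p q ε a a := by
  set δ := min (ε / 4) ((q - p) / 2) with hδ
  have hδ0 : 0 < δ := lt_min (by linarith) (by linarith)
  have hδ1 : δ ≤ ε / 4 := min_le_left _ _
  have hδ2 : δ ≤ (q - p) / 2 := min_le_right _ _
  refine ⟨δ, δ, hδ0, hδ0, by linarith, fun f hf => ?_⟩
  obtain ⟨x, hx1, hx2, rfl⟩ := hf.eq_rot
  refine ⟨rot p δ δ, (id ∘ rot p δ δ) ∘ rot x a a,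
    rot_isRR hδ0 hδ0 le_rfl (by linarith), ?_, ?_⟩
  · exact swapProd_comp (swapProd_comp (swapProd_id p q)
      (rot_isSwap hδ0 le_rfl (by linarith))) (rot_isSwap ha hx1 hx2)
  · have h1 : rot p δ δ ∘ ((id ∘ rot p δ δ) ∘ rot x a a)
        = (rot p δ δ ∘ rot p δ δ) ∘ rot x a a := rfl
    rw [h1, rot_invol hδ0]
    rfl

lemma S3 {p q ε a b : ℝ} (ha : 0 < a) (hab : a < b)
    (H : Solv p q ε a (b - a)) : Solv p q ε a b := by
  obtain ⟨a₀, b₀, h0, h1, h2, H⟩ := H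
  refine ⟨a₀, b₀, h0, h1, h2, fun f hf => ?_⟩
  obtain ⟨x, hx1, hx2, rfl⟩ := hf.eq_rot
  obtain ⟨h, g, hh, hg, hcomp⟩ := H (rot (x + a) a (b - a))
    (rot_isRR ha (by linarith) (by linarith) (by linarith))
  refine ⟨h, g ∘ rot x a a, hh,
    swapProd_comp hg (rot_isSwap ha hx1 (by linarith)), ?_⟩
  rw [rotA ha hab, hcomp]
  rfl

lemma S4 {p q ε a b : ℝ} (hb : 0 < b) (hba : b < a)
    (H : Solv p q ε (a - b) b) : Solv p q ε a b := by
  obtain ⟨a₀, b₀, h0, h1, h2, H⟩ := H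
  refine ⟨a₀, b₀, h0, h1, h2, fun f hf => ?_⟩
  obtain ⟨x, hx1, hx2, rfl⟩ := hf.eq_rot
  obtain ⟨h, g, hh, hg, hcomp⟩ := H (rot x (a - b) b)
    (rot_isRR (by linarith) hb hx1 (by linarith))
  refine ⟨h, g ∘ rot (x + (a - b)) b b, hh,
    swapProd_comp hg (rot_isSwap hb (by linarith) (by linarith)), ?_⟩
  rw [rotB hb hba, hcomp]
  rfl

lemma roundB {p q ε : ℝ} : ∀ k : ℕ, ∀ a b : ℝ, 0 < a → 0 < b →
    b ≤ a * (k + 1) →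
    (∀ b', 0 < b' → b' ≤ a → Solv p q ε a b') → Solv p q ε a b := by
  intro k
  induction k with
  | zero =>
    intro a b ha hb hle cont
    exact cont b hb (by push_cast at hle; linarith)
  | succ k ih =>
    intro a b ha hb hle cont
    rcases le_or_gt b a with h | h
    · exact cont b hb h
    · refine S3 ha h (ih a (b - a) ha (by linarith) ?_ cont)
      push_cast at hle ⊢
      ring_nf at hle ⊢
      linarith

lemma roundA {p q ε : ℝ} : ∀ k : ℕ, ∀ a b : ℝ, 0 < a → 0 < b →
    a ≤ b * (k + 1) →
    (∀ a', 0 < a' → a' ≤ b → Solv p q ε a' b) → Solv p q ε a b := by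
  intro k
  induction k with
  | zero =>
    intro a b ha hb hle cont
    exact cont a ha (by push_cast at hle; linarith)
  | succ k ih =>
    intro a b ha hb hle cont
    rcases le_or_gt a b with h | h
    · exact cont a ha h
    · refine S4 hb h (ih (a - b) b (by linarith) hb ?_ cont)
      push_cast at hle ⊢
      ring_nf at hle ⊢
      linarith

lemma arch_bound {a b : ℝ} (ha : 0 < a) : ∃ k : ℕ, b ≤ a * (k + 1) := by
  obtain ⟨k, hk⟩ := exists_nat_ge (b / a)
  refine ⟨k, ?_⟩
  rw [div_le_iff₀ ha] at hk
  nlinarith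

lemma halving {p q ε : ℝ} (hpq : p < q) (hε : 0 < ε) :
    ∀ n : ℕ, ∀ a b : ℝ, 0 < a → 0 < b → min a b ≤ ε / 4 * 2 ^ n →
      Solv p q ε a b := by
  intro n
  induction n with
  | zero =>
    intro a b ha hb hmin
    rcases le_total a b with h | h
    · have hA : a ≤ ε / 4 := by
        rw [min_eq_left h] at hmin
        simpa using hmin
      obtain ⟨k, hk⟩ := arch_bound ha (b := b)
      exact roundB k a b ha hb hk fun b' hb' hba => S1 ha hb' (by linarith)
    · have hB : b ≤ ε / 4 := by
        rw [min_eq_right h] at hmin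
        simpa using hmin
      obtain ⟨k, hk⟩ := arch_bound hb (b := a)
      exact roundA k a b ha hb hk fun a' ha' hab => S1 ha' hb (by linarith)
  | succ n ihn =>
    intro a b ha hb hmin
    have h2n : ε / 4 * 2 ^ (n + 1) = ε / 4 * 2 ^ n * 2 := by
      rw [pow_succ]; ring
    rcases le_total a b with h | h
    · have hA : a ≤ ε / 4 * 2 ^ (n + 1) := by rwa [min_eq_left h] at hmin
      obtain ⟨k, hk⟩ := arch_bound ha (b := b)
      refine roundB k a b ha hb hk ?_
      intro b' hb' hb'a
      rcases eq_or_lt_of_le hb'a with heq | hlt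
      · rw [heq]; exact S2 hpq hε ha
      · rcases le_or_gt b' (a / 2) with h2 | h2
        · refine ihn a b' ha hb' ?_
          rw [min_eq_right hb'a]
          linarith
        · refine S4 hb' hlt (ihn (a - b') b' (by linarith) hb' ?_)
          rw [min_eq_left (by linarith : a - b' ≤ b')]
          linarith
    · have hB : b ≤ ε / 4 * 2 ^ (n + 1) := by rwa [min_eq_right h] at hmin
      obtain ⟨k, hk⟩ := arch_bound hb (b := a)
      refine roundA k a b ha hb hk ?_
      intro a' ha' ha'b
      rcases eq_or_lt_of_le ha'b with heq | hlt
      · rw [heq]; exact S2 hpq hε hb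
      · rcases le_or_gt a' (b / 2) with h2 | h2
        · refine ihn a' b ha' hb ?_
          rw [min_eq_left ha'b]
          linarith
        · refine S3 ha' hlt (ihn a' (b - a') ha' (by linarith) ?_)
          rw [min_eq_right (by linarith : b - a' ≤ a')]
          linarith

/-- Given `a, b, ε > 0`, there are positive reals `a₀, b₀` with `a₀ + b₀ < ε`
such that every restricted rotation of type `(a, b)` on `[p, q)` factors as a
restricted rotation of type `(a₀, b₀)` followed by a product of interval swap
maps. -/
theorem rotation_factorization (p q a b ε : ℝ) (hpq : p < q)
    (ha : 0 < a) (hb : 0 < b) (hε : 0 < ε) (hab : a + b ≤ q - p) :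
    ∃ a₀ b₀ : ℝ, 0 < a₀ ∧ 0 < b₀ ∧ a₀ + b₀ < ε ∧
      ∀ f : ℝ → ℝ, IsRestrictedRotation p q a b f →
        ∃ h g : ℝ → ℝ, IsRestrictedRotation p q a₀ b₀ h ∧
          IsSwapProduct p q g ∧ f = h ∘ g := by
  obtain ⟨n, hn⟩ := exists_nat_ge (min a b / (ε / 4))
  have hε4 : (0:ℝ) < ε / 4 := by linarith
  have hmin : min a b ≤ ε / 4 * 2 ^ n := by
    rw [div_le_iff₀ hε4] at hn
    have h2 : (n : ℝ) ≤ 2 ^ n := by exact_mod_cast (Nat.lt_two_pow_self (n := n)).le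
    nlinarith [mul_le_mul_of_nonneg_right h2 hε4.le]
  exact halving hpq hε n a b ha hb hmin
end

section
/- If f_1 and f_2 are restricted rotations of the same type (a,b) on I = [p,q), then f_1^{-1} f_2 is a finite product of interval swap maps. -/
open scoped TensorProduct

-- auxiliary development, to be inserted before the theorem
noncomputable def swapFun (x y l : ℝ) (z : ℝ) : ℝ :=
  if x ≤ z ∧ z < x + l then z + (y - x)
  else if y ≤ z ∧ z < y + l then z - (y - x) else z

lemma swapFun_isSwap {p q x y l : ℝ} (hl : 0 < l) (hx : p ≤ x) (hxy : x + l ≤ y)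
    (hyq : y + l ≤ q) : IsIntervalSwap p q l (swapFun x y l) := by
  refine ⟨hl, x, y, hx, hxy, hyq, ?_, ?_, ?_⟩
  · intro z hz
    simp only [Set.mem_Ico] at hz
    simp only [swapFun, if_pos hz]
  · intro z hz
    simp only [Set.mem_Ico] at hz
    have h1 : ¬ (x ≤ z ∧ z < x + l) := by rintro ⟨h, h'⟩; linarith [hz.1]
    simp only [swapFun, if_neg h1, if_pos hz]
  · intro z hz
    simp only [Set.mem_union, Set.mem_Ico, not_or, not_and, not_lt] at hz
    have h1 : ¬ (x ≤ z ∧ z < x + l) := by rintro ⟨h, h'⟩; exact absurd (hz.1 h) (not_le.2 h')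
    have h2 : ¬ (y ≤ z ∧ z < y + l) := by rintro ⟨h, h'⟩; exact absurd (hz.2 h) (not_le.2 h')
    simp only [swapFun, if_neg h1, if_neg h2]

noncomputable def rotFun (x a b z : ℝ) : ℝ :=
  if x ≤ z ∧ z < x + a then z + b
  else if x + a ≤ z ∧ z < x + a + b then z - a else z

lemma rot_eq_rotFun {p q a b : ℝ} {f : ℝ → ℝ} (h : IsRestrictedRotation p q a b f) :
    ∃ x, p ≤ x ∧ x + a + b ≤ q ∧ ∀ z, f z = rotFun x a b z := by
  obtain ⟨ha, hb, x, hx, hxq, h1, h2, h3⟩ := h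
  refine ⟨x, hx, hxq, fun z => ?_⟩
  by_cases c1 : x ≤ z ∧ z < x + a
  · rw [rotFun, if_pos c1]; exact h1 z (Set.mem_Ico.2 c1)
  · by_cases c2 : x + a ≤ z ∧ z < x + a + b
    · rw [rotFun, if_neg c1, if_pos c2]; exact h2 z (Set.mem_Ico.2 c2)
    · rw [rotFun, if_neg c1, if_neg c2]
      apply h3
      simp only [Set.mem_Ico, not_and, not_lt]
      intro hxz
      by_contra hc
      push_neg at hc
      rw [not_and, not_lt] at c1 c2
      exact absurd (c2 (c1 hxz)) (not_le.2 hc)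

lemma foldr_comp_append (L₁ L₂ : List (ℝ → ℝ)) :
    (L₁ ++ L₂).foldr (· ∘ ·) id = (L₁.foldr (· ∘ ·) id) ∘ (L₂.foldr (· ∘ ·) id) := by
  induction L₁ with
  | nil => rfl
  | cons h t ih => simp [List.foldr_cons, ih, Function.comp_assoc]

lemma swapProduct_comp {p q : ℝ} {g₁ g₂ : ℝ → ℝ} (h₁ : IsSwapProduct p q g₁)
    (h₂ : IsSwapProduct p q g₂) : IsSwapProduct p q (g₁ ∘ g₂) := by
  obtain ⟨L₁, hL₁, rfl⟩ := h₁
  obtain ⟨L₂, hL₂, rfl⟩ := h₂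
  refine ⟨L₁ ++ L₂, ?_, (foldr_comp_append L₁ L₂).symm⟩
  intro g hg
  rcases List.mem_append.1 hg with h | h
  · exact hL₁ g h
  · exact hL₂ g h

lemma swapProduct_id {p q : ℝ} : IsSwapProduct p q id := ⟨[], by simp, rfl⟩

lemma swapProduct_single {p q l : ℝ} {g : ℝ → ℝ} (h : IsIntervalSwap p q l g) :
    IsSwapProduct p q g := ⟨[g], by simp; exact ⟨l, h⟩, rfl⟩

lemma swap_involutive {p q l : ℝ} {g : ℝ → ℝ} (h : IsIntervalSwap p q l g) :
    ∀ z, g (g z) = z := by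
  obtain ⟨hl, x, y, hx, hxy, hyq, h1, h2, h3⟩ := h
  intro z
  by_cases c1 : x ≤ z ∧ z < x + l
  · have e1 : g z = z + (y - x) := h1 z (Set.mem_Ico.2 c1)
    have e2 : g (z + (y - x)) = z + (y - x) - (y - x) := by
      apply h2; simp only [Set.mem_Ico]; constructor <;> linarith [c1.1, c1.2]
    rw [e1, e2]; ring
  · by_cases c2 : y ≤ z ∧ z < y + l
    · have e1 : g z = z - (y - x) := h2 z (Set.mem_Ico.2 c2)
      have e2 : g (z - (y - x)) = z - (y - x) + (y - x) := by
        apply h1; simp only [Set.mem_Ico]; constructor <;> linarith [c2.1, c2.2]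
      rw [e1, e2]; ring
    · have hz : z ∉ Set.Ico x (x + l) ∪ Set.Ico y (y + l) := by
        simp only [Set.mem_union, Set.mem_Ico]; tauto
      rw [h3 z hz, h3 z hz]

lemma swapProduct_inverse {p q : ℝ} {g : ℝ → ℝ} (h : IsSwapProduct p q g) :
    ∃ g', IsSwapProduct p q g' ∧ ∀ z, g (g' z) = z := by
  obtain ⟨L, hL, rfl⟩ := h
  induction L with
  | nil => exact ⟨id, swapProduct_id, fun z => rfl⟩
  | cons hd t ih =>
    obtain ⟨g', hg', hinv⟩ := ih (fun g hg => hL g (List.mem_cons_of_mem _ hg))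
    obtain ⟨l, hswap⟩ := hL hd List.mem_cons_self
    refine ⟨g' ∘ hd, swapProduct_comp hg' (swapProduct_single hswap), fun z => ?_⟩
    simp only [List.foldr_cons, Function.comp_apply]
    rw [hinv (hd z), swap_involutive hswap z]

set_option maxHeartbeats 1600000 in
/-- Core computation: displacement `d ≤ a`. -/
lemma key_le_a {p q a b x d : ℝ} (ha : 0 < a) (hb : 0 < b) (hd : 0 < d) (hda : d ≤ a)
    (hx : p ≤ x) (hq : x + d + a + b ≤ q) :
    ∀ z, rotFun x a b (swapFun x (x + a + b) d (swapFun x (x + a) d z)) =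
      rotFun (x + d) a b z := by
  intro z
  simp only [rotFun, swapFun]
  split_ifs <;>
    first
      | linarith
      | (simp only [not_and_or, not_le, not_lt] at *; casesm* _ ∨ _ <;> linarith)

set_option maxHeartbeats 1600000 in
/-- Core computation: displacement `d ≤ b`. -/
lemma key_le_b {p q a b x d : ℝ} (ha : 0 < a) (hb : 0 < b) (hd : 0 < d) (hdb : d ≤ b)
    (hx : p ≤ x) (hq : x + d + a + b ≤ q) :
    ∀ z, rotFun x a b (swapFun (x + a) (x + a + b) d (swapFun x (x + a + b) d z)) =
      rotFun (x + d) a b z := by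
  intro z
  simp only [rotFun, swapFun]
  split_ifs <;>
    first
      | linarith
      | (simp only [not_and_or, not_le, not_lt] at *; casesm* _ ∨ _ <;> linarith)

/-- Small-displacement case packaged with the swap-product structure. -/
lemma small_step {p q a b x d : ℝ} (ha : 0 < a) (hb : 0 < b) (hd0 : 0 ≤ d)
    (hdm : d ≤ max a b) (hx : p ≤ x) (hq : x + d + a + b ≤ q) :
    ∃ g, IsSwapProduct p q g ∧
      ∀ z, rotFun x a b (g z) = rotFun (x + d) a b z := by
  rcases eq_or_lt_of_le hd0 with rfl | hd
  · exact ⟨id, swapProduct_id, fun z => by rw [id_eq, add_zero]⟩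
  rcases le_max_iff.1 hdm with hda | hdb
  · refine ⟨(swapFun x (x + a + b) d) ∘ (swapFun x (x + a) d),
      swapProduct_comp (swapProduct_single (swapFun_isSwap hd hx (by linarith) (by linarith)))
        (swapProduct_single (swapFun_isSwap hd hx (by linarith) (by linarith))),
      key_le_a ha hb hd hda hx hq⟩
  · refine ⟨(swapFun (x + a) (x + a + b) d) ∘ (swapFun x (x + a + b) d),
      swapProduct_comp (swapProduct_single (swapFun_isSwap hd (by linarith) (by linarith) (by linarith)))
        (swapProduct_single (swapFun_isSwap hd hx (by linarith) (by linarith))),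
      key_le_b ha hb hd hdb hx hq⟩

/-- Main induction on the number of `max a b`-sized steps. -/
lemma main_ind {p q a b : ℝ} (ha : 0 < a) (hb : 0 < b) :
    ∀ n : ℕ, ∀ x₁ x₂ : ℝ, p ≤ x₁ → x₁ ≤ x₂ → x₂ + a + b ≤ q →
      x₂ - x₁ ≤ n * max a b →
      ∃ g, IsSwapProduct p q g ∧
        ∀ z, rotFun x₁ a b (g z) = rotFun x₂ a b z := by
  intro n
  induction n with
  | zero =>
    intro x₁ x₂ hx₁ hle hq hn
    have : x₁ = x₂ := by
      have : (0:ℝ) * max a b = 0 := by ring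
      have h0 : x₂ - x₁ ≤ 0 := by simpa using hn
      linarith
    subst this
    exact ⟨id, swapProduct_id, fun z => rfl⟩
  | succ n ih =>
    intro x₁ x₂ hx₁ hle hq hn
    set m := max a b with hm
    have hm0 : 0 < m := lt_max_of_lt_left ha
    rcases le_total (x₂ - x₁) m with hsmall | hbig
    · obtain ⟨g, hg, hgeq⟩ := small_step (p := p) (q := q) ha hb
        (by linarith) hsmall hx₁ (by linarith)
      refine ⟨g, hg, fun z => ?_⟩
      have : x₁ + (x₂ - x₁) = x₂ := by ring
      rw [hgeq z, this]
    · -- split at e = x₂ - m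
      set e := x₂ - m with he
      have h1 : x₁ ≤ e := by simp only [he]; linarith
      have h2 : p ≤ e := hx₁.trans h1
      obtain ⟨g₁, hg₁, hg₁eq⟩ := ih x₁ e hx₁ h1 (by simp only [he]; linarith)
        (by simp only [he]; push_cast at hn ⊢; linarith)
      obtain ⟨g₂, hg₂, hg₂eq⟩ := small_step (p := p) (q := q) ha hb hm0.le
        le_rfl h2 (by simp only [he]; linarith)
      refine ⟨g₁ ∘ g₂, swapProduct_comp hg₁ hg₂, fun z => ?_⟩
      have : e + m = x₂ := by simp only [he]; ring
      rw [Function.comp_apply, hg₁eq (g₂ z), hg₂eq z, this]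

/-- If `f₁` and `f₂` are restricted rotations of the same type `(a, b)`, then
`f₁⁻¹ ∘ f₂` is a finite product of interval swap maps. -/
theorem rotations_same_type (p q a b : ℝ) (f₁ f₂ : ℝ → ℝ)
    (h₁ : IsRestrictedRotation p q a b f₁)
    (h₂ : IsRestrictedRotation p q a b f₂) :
    ∃ g : ℝ → ℝ, IsSwapProduct p q g ∧ f₁ ∘ g = f₂ := by
  have ha : 0 < a := h₁.1
  have hb : 0 < b := h₁.2.1
  obtain ⟨x₁, hx₁p, hx₁q, hf₁⟩ := rot_eq_rotFun h₁
  obtain ⟨x₂, hx₂p, hx₂q, hf₂⟩ := rot_eq_rotFun h₂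
  have hm0 : 0 < max a b := lt_max_of_lt_left ha
  rcases le_total x₁ x₂ with hle | hle
  · obtain ⟨n, hn⟩ := exists_nat_ge ((x₂ - x₁) / max a b)
    have hn' : x₂ - x₁ ≤ n * max a b := by
      rw [div_le_iff₀ hm0] at hn; exact hn
    obtain ⟨g, hg, heq⟩ := main_ind ha hb n x₁ x₂ hx₁p hle hx₂q hn'
    refine ⟨g, hg, funext fun z => ?_⟩
    rw [Function.comp_apply, hf₁, heq z, ← hf₂]
  · obtain ⟨n, hn⟩ := exists_nat_ge ((x₁ - x₂) / max a b)
    have hn' : x₁ - x₂ ≤ n * max a b := by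
      rw [div_le_iff₀ hm0] at hn; exact hn
    obtain ⟨g, hg, heq⟩ := main_ind ha hb n x₂ x₁ hx₂p hle hx₁q hn'
    obtain ⟨g', hg', hinv⟩ := swapProduct_inverse hg
    refine ⟨g', hg', funext fun z => ?_⟩
    rw [Function.comp_apply, hf₁, hf₂, ← heq (g' z), hinv z]
end
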